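/- (Primal descent) For the DS-GDA iterates, F(x^t,y^t,z^t,v^t) ≥ F(x^{t+1},y^{t+1},z^{t+1},v^{t+1}) + (1/c − (L_x+r₁)/2)‖x^{t+1}−x^t‖² + ⟨∇_y F(x^{t+1},y^t,z^t,v^t), y^t − y^{t+1}⟩ + ((r₂−L_y)/2)‖y^{t+1}−y^t‖² + ((2−β)/(2β))·r₁‖z^{t+1}−z^t‖² + ((μ−2)/(2μ))·r₂‖v^{t+1}−v^t‖². -/

import Mathlib

open scoped RealInnerProductSpace

lemma descent_lemma' {E : Type*} [NormedAddCommGroup E] [InnerProductSpace ℝ E]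
    [CompleteSpace E]
    (g : E → ℝ) (G : E → E) (L : ℝ)
    (hg : ∀ x, HasGradientAt g (G x) x)
    (hLip : ∀ x x', ‖G x - G x'‖ ≤ L * ‖x - x'‖)
    (a b : E) : g b ≤ g a + ⟪G a, b - a⟫ + L / 2 * ‖b - a‖ ^ 2 := by
  set c : ℝ → E := fun t => a + t • (b - a) with hcdef
  have hc : ∀ t : ℝ, HasDerivAt c (b - a) t := by
    intro t
    simpa [hcdef] using ((hasDerivAt_id t).smul_const (b - a)).const_add a
  have hφ : ∀ t : ℝ, HasDerivAt (fun s => g (c s)) ⟪G (c t), b - a⟫ t := by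
    intro t
    have h1 := (hg (c t)).hasFDerivAt
    have h2 := h1.comp_hasDerivAt t (hc t)
    simpa [InnerProductSpace.toDual_apply_apply, Function.comp_def] using h2
  have hGcont : Continuous G := by
    have : LipschitzWith (Real.toNNReal L) G := by
      apply LipschitzWith.of_dist_le_mul
      intro x y
      calc dist (G x) (G y) = ‖G x - G y‖ := by rw [dist_eq_norm]
        _ ≤ L * ‖x - y‖ := hLip x y
        _ ≤ Real.toNNReal L * ‖x - y‖ := by
            apply mul_le_mul_of_nonneg_right (Real.le_coe_toNNReal L) (norm_nonneg _)
        _ = Real.toNNReal L * dist x y := by rw [dist_eq_norm]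
    exact this.continuous
  have hccont : Continuous c := by continuity
  have hψcont : Continuous fun t : ℝ => ⟪G (c t), b - a⟫ :=
    (hGcont.comp hccont).inner continuous_const
  have hInt : IntervalIntegrable (fun t : ℝ => ⟪G (c t), b - a⟫) MeasureTheory.volume 0 1 :=
    hψcont.intervalIntegrable _ _
  have key : g b - g a = ∫ t in (0:ℝ)..1, ⟪G (c t), b - a⟫ := by
    have := intervalIntegral.integral_eq_sub_of_hasDerivAt
      (f := fun s => g (c s)) (f' := fun t => ⟪G (c t), b - a⟫)
      (fun t _ => hφ t) hInt
    rw [this]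
    simp [hcdef]
  have hbnd : ∀ t ∈ Set.Icc (0:ℝ) 1,
      ⟪G (c t), b - a⟫ ≤ ⟪G a, b - a⟫ + L * ‖b - a‖ ^ 2 * t := by
    intro t ht
    have h1 : ⟪G (c t) - G a, b - a⟫ ≤ ‖G (c t) - G a‖ * ‖b - a‖ := real_inner_le_norm _ _
    have h2 : ‖G (c t) - G a‖ ≤ L * ‖c t - a‖ := hLip _ _
    have h3 : ‖c t - a‖ = t * ‖b - a‖ := by
      have : c t - a = t • (b - a) := by simp [hcdef]
      rw [this, norm_smul, Real.norm_eq_abs, abs_of_nonneg ht.1]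
    have h4 : ⟪G (c t), b - a⟫ = ⟪G a, b - a⟫ + ⟪G (c t) - G a, b - a⟫ := by
      rw [inner_sub_left]; ring
    have h5 := mul_le_mul_of_nonneg_right h2 (norm_nonneg (b - a))
    rw [h3] at h5
    nlinarith [norm_nonneg (b - a)]
  have hInt2 : IntervalIntegrable (fun t : ℝ => ⟪G a, b - a⟫ + L * ‖b - a‖ ^ 2 * t)
      MeasureTheory.volume 0 1 := by
    apply Continuous.intervalIntegrable; continuity
  have hmono := intervalIntegral.integral_mono_on (by norm_num : (0:ℝ) ≤ 1) hInt hInt2 hbnd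
  have hval : (∫ t in (0:ℝ)..1, (⟪G a, b - a⟫ + L * ‖b - a‖ ^ 2 * t))
      = ⟪G a, b - a⟫ + L / 2 * ‖b - a‖ ^ 2 := by
    rw [intervalIntegral.integral_add (intervalIntegrable_const)
      (by apply Continuous.intervalIntegrable; continuity),
      intervalIntegral.integral_const_mul, integral_id]
    simp; ring
  nlinarith [key ▸ hmono, hval ▸ hmono]

set_option maxHeartbeats 1000000 in
/-- Primal descent: one-step descent estimate for the DS-GDA iterates. -/
theorem stmt_9
    {E D : Type*} [NormedAddCommGroup E] [InnerProductSpace ℝ E] [CompleteSpace E]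
    [NormedAddCommGroup D] [InnerProductSpace ℝ D] [CompleteSpace D]
    (f : E → D → ℝ) (gx : E → D → E) (gy : E → D → D) (Lx Ly r₁ r₂ c α β μ : ℝ)
    (hc : c > 0) (hα : α > 0) (hβ : 0 < β) (hβ1 : β < 1) (hμ : 0 < μ) (hμ1 : μ < 1)
    (X : Set E) (Y : Set D)
    (hXc : IsCompact X) (hXconv : Convex ℝ X) (hXne : X.Nonempty)
    (hYc : IsCompact Y) (hYconv : Convex ℝ Y) (hYne : Y.Nonempty)
    (hgradx : ∀ x y, HasGradientAt (fun x' => f x' y) (gx x y) x)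
    (hgrady : ∀ x y, HasGradientAt (fun y' => f x y') (gy x y) y)
    (hLipx : ∀ x x' y y', ‖gx x y - gx x' y'‖ ≤ Lx * (‖x - x'‖ + ‖y - y'‖))
    (hLipy : ∀ x x' y y', ‖gy x y - gy x' y'‖ ≤ Ly * (‖x - x'‖ + ‖y - y'‖))
    (F : E → D → E → D → ℝ)
    (hF : ∀ x y z v, F x y z v
      = f x y + r₁ / 2 * ‖x - z‖ ^ 2 - r₂ / 2 * ‖y - v‖ ^ 2)
    (x0 x1 : E) (y0 y1 : D) (z0 z1 : E) (v0 v1 : D)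
    (hx0 : x0 ∈ X) (hy0 : y0 ∈ Y)
    -- x1 = proj_X (x0 - c • ∇ₓF(x0,y0,z0,v0))
    (hx1 : x1 ∈ X)
    (hx1proj : ∀ w ∈ X, ⟪(x0 - c • (gx x0 y0 + r₁ • (x0 - z0))) - x1, w - x1⟫ ≤ 0)
    -- y1 = proj_Y (y0 + α • ∇_yF(x1,y0,z0,v0))
    (hy1 : y1 ∈ Y)
    (hy1proj : ∀ w ∈ Y, ⟪(y0 + α • (gy x1 y0 - r₂ • (y0 - v0))) - y1, w - y1⟫ ≤ 0)
    (hz1 : z1 = z0 + β • (x1 - z0))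
    (hv1 : v1 = v0 + μ • (y1 - v0)) :
    F x0 y0 z0 v0 ≥
      F x1 y1 z1 v1 + (1 / c - (Lx + r₁) / 2) * ‖x1 - x0‖ ^ 2 +
        ⟪gy x1 y0 - r₂ • (y0 - v0), y0 - y1⟫ + (r₂ - Ly) / 2 * ‖y1 - y0‖ ^ 2 +
        (2 - β) / (2 * β) * r₁ * ‖z1 - z0‖ ^ 2 +
        (μ - 2) / (2 * μ) * r₂ * ‖v1 - v0‖ ^ 2 := by
  -- descent lemma in x
  have dA : f x1 y0 ≤ f x0 y0 + ⟪gx x0 y0, x1 - x0⟫ + Lx / 2 * ‖x1 - x0‖ ^ 2 :=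
    descent_lemma' (fun x => f x y0) (fun x => gx x y0) Lx (fun x => hgradx x y0)
      (fun x x' => by simpa using hLipx x x' y0 y0) x0 x1
  -- descent lemma in y
  have dB : f x1 y1 ≤ f x1 y0 + ⟪gy x1 y0, y1 - y0⟫ + Ly / 2 * ‖y1 - y0‖ ^ 2 :=
    descent_lemma' (fun y => f x1 y) (fun y => gy x1 y) Ly (fun y => hgrady x1 y)
      (fun y y' => by simpa using hLipy x1 x1 y y') y0 y1
  -- projection inequality
  have hP : ‖x1 - x0‖ ^ 2 ≤ c * (-(⟪gx x0 y0, x1 - x0⟫) - r₁ * ⟪x1 - x0, x0 - z0⟫) := by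
    have hp := hx1proj x0 hx0
    have e1 : (x0 - c • (gx x0 y0 + r₁ • (x0 - z0))) - x1
        = (x0 - x1) - c • (gx x0 y0 + r₁ • (x0 - z0)) := by rw [sub_right_comm]
    rw [e1, inner_sub_left, real_inner_smul_left, inner_add_left, real_inner_smul_left] at hp
    have e2 : ⟪x0 - x1, x0 - x1⟫ = ‖x1 - x0‖ ^ 2 := by
      rw [real_inner_self_eq_norm_sq, norm_sub_rev]
    have e3 : ⟪gx x0 y0, x0 - x1⟫ = -⟪gx x0 y0, x1 - x0⟫ := by
      rw [show x0 - x1 = -(x1 - x0) from by abel, inner_neg_right]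
    have e4 : ⟪x0 - z0, x0 - x1⟫ = -⟪x1 - x0, x0 - z0⟫ := by
      rw [show x0 - x1 = -(x1 - x0) from by abel, inner_neg_right, real_inner_comm]
    rw [e2, e3, e4] at hp
    nlinarith [hp]
  have hP' : 1 / c * ‖x1 - x0‖ ^ 2
      ≤ -(⟪gx x0 y0, x1 - x0⟫) - r₁ * ⟪x1 - x0, x0 - z0⟫ := by
    rw [one_div, inv_mul_le_iff₀ hc]
    linarith [hP]
  -- norm expansions
  have h1 : ‖x1 - z0‖ ^ 2 = ‖x1 - x0‖ ^ 2 + 2 * ⟪x1 - x0, x0 - z0⟫ + ‖x0 - z0‖ ^ 2 := by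
    rw [show x1 - z0 = (x1 - x0) + (x0 - z0) from by abel, norm_add_sq_real]
  have h2 : ‖y1 - v0‖ ^ 2 = ‖y1 - y0‖ ^ 2 + 2 * ⟪y1 - y0, y0 - v0⟫ + ‖y0 - v0‖ ^ 2 := by
    rw [show y1 - v0 = (y1 - y0) + (y0 - v0) from by abel, norm_add_sq_real]
  have hznorm : ‖z1 - z0‖ ^ 2 = β ^ 2 * ‖x1 - z0‖ ^ 2 := by
    rw [show z1 - z0 = β • (x1 - z0) from by rw [hz1]; abel, norm_smul, mul_pow,
      Real.norm_eq_abs, sq_abs]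
  have hxz1 : ‖x1 - z1‖ ^ 2 = (1 - β) ^ 2 * ‖x1 - z0‖ ^ 2 := by
    rw [show x1 - z1 = (1 - β) • (x1 - z0) from by rw [hz1, sub_smul, one_smul]; abel,
      norm_smul, mul_pow, Real.norm_eq_abs, sq_abs]
  have hvnorm : ‖v1 - v0‖ ^ 2 = μ ^ 2 * ‖y1 - v0‖ ^ 2 := by
    rw [show v1 - v0 = μ • (y1 - v0) from by rw [hv1]; abel, norm_smul, mul_pow,
      Real.norm_eq_abs, sq_abs]
  have hyv1 : ‖y1 - v1‖ ^ 2 = (1 - μ) ^ 2 * ‖y1 - v0‖ ^ 2 := by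
    rw [show y1 - v1 = (1 - μ) • (y1 - v0) from by rw [hv1, sub_smul, one_smul]; abel,
      norm_smul, mul_pow, Real.norm_eq_abs, sq_abs]
  -- target inner product term
  have hq : ⟪gy x1 y0 - r₂ • (y0 - v0), y0 - y1⟫
      = -⟪gy x1 y0, y1 - y0⟫ + r₂ * ⟪y1 - y0, y0 - v0⟫ := by
    rw [inner_sub_left, real_inner_smul_left]
    have a1 : ⟪gy x1 y0, y0 - y1⟫ = -⟪gy x1 y0, y1 - y0⟫ := by
      rw [show y0 - y1 = -(y1 - y0) from by abel, inner_neg_right]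
    have a2 : ⟪y0 - v0, y0 - y1⟫ = -⟪y1 - y0, y0 - v0⟫ := by
      rw [show y0 - y1 = -(y1 - y0) from by abel, inner_neg_right, real_inner_comm]
    rw [a1, a2]; ring
  -- β, μ coefficient simplification
  have eβ : (2 - β) / (2 * β) * r₁ * (β ^ 2 * ‖x1 - z0‖ ^ 2)
      = (2 - β) * β / 2 * r₁ * ‖x1 - z0‖ ^ 2 := by
    field_simp
  have eμ : (μ - 2) / (2 * μ) * r₂ * (μ ^ 2 * ‖y1 - v0‖ ^ 2)
      = (μ - 2) * μ / 2 * r₂ * ‖y1 - v0‖ ^ 2 := by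
    field_simp
  rw [hF x0 y0 z0 v0, hF x1 y1 z1 v1, hq, hznorm, hvnorm, hxz1, hyv1, eβ, eμ, h1, h2]
  linarith [dA, dB, hP']
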